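/- Let T > 0 and let V : ℝⁿ → ℝⁿ be Lipschitz continuous. Then for every p ∈ ℕ* there exists C₀ > 0 such that for all (θ,x) ∈ [0,T]×ℝⁿ, 1 + ‖Ψ₂^V(θ,x)‖^{2p} ≤ exp(C₀θ)(1 + ‖x‖^{2p}). -/
import Mathlib

lemma aux_pow_sub_pow (u v : ℝ) (hv : 0 ≤ v) (hvu : v ≤ u) :
    ∀ q : ℕ, u ^ (q+1) - v ^ (q+1) ≤ (q+1) * (u - v) * u ^ q := by
  intro q
  induction q with
  | zero => simp
  | succ r ih =>
    have hvu' : v ^ (r+1) ≤ u ^ (r+1) := pow_le_pow_left₀ hv hvu _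
    have hu : 0 ≤ u := le_trans hv hvu
    have e1 : u ^ (r+1+1) = u * u ^ (r+1) := pow_succ' u (r+1)
    have e2 : v ^ (r+1+1) = v * v ^ (r+1) := pow_succ' v (r+1)
    have e3 : u ^ (r+1) = u * u ^ r := pow_succ' u r
    have h1' : u * (u ^ (r+1) - v ^ (r+1)) ≤ ((r:ℝ)+1) * (u - v) * u ^ (r+1) := by
      calc u * (u ^ (r+1) - v ^ (r+1)) ≤ u * (((r:ℝ)+1) * (u - v) * u ^ r) := by
            apply mul_le_mul_of_nonneg_left _ hu; linarith
        _ = ((r:ℝ)+1) * (u - v) * u ^ (r+1) := by rw [e3]; ring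
    have h2 : (u - v) * v ^ (r+1) ≤ (u - v) * u ^ (r+1) :=
      mul_le_mul_of_nonneg_left hvu' (sub_nonneg.mpr hvu)
    rw [e1, e2]
    push_cast
    nlinarith

lemma aux_small (M θ u v : ℝ) (r : ℕ) (hM : 0 < M) (hθ0 : 0 ≤ θ)
    (hu : 0 ≤ u) (hv : 0 ≤ v) (hle : u ≤ v + θ * M * (1 + v))
    (hsmall : 4 * ((r:ℝ)+1) * M * θ ≤ 1) :
    1 + u ^ (r+1) ≤ (1 + 4 * ((r:ℝ)+1) * M * θ) * (1 + v ^ (r+1)) := by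
  have hvq : (0:ℝ) ≤ v ^ (r+1) := pow_nonneg hv _
  have huq : (0:ℝ) ≤ u ^ (r+1) := pow_nonneg hu _
  have hq' : (0:ℝ) < (r:ℝ) + 1 := by positivity
  have htpos : (0:ℝ) ≤ 4 * ((r:ℝ)+1) * M * θ := by positivity
  by_cases huv : u ≤ v
  · have h0 : u ^ (r+1) ≤ v ^ (r+1) := pow_le_pow_left₀ hu huv _
    nlinarith
  · push_neg at huv
    have hpow := aux_pow_sub_pow u v hv huv.le r
    have h2 : u - v ≤ θ * M * (1 + u) := by nlinarith
    have h3 : u ^ r ≤ 1 + u ^ (r+1) := by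
      rcases le_total u 1 with h | h
      · have : u ^ r ≤ 1 := pow_le_one₀ hu h
        linarith
      · have : u ^ r ≤ u ^ (r+1) := pow_le_pow_right₀ h (Nat.le_succ r)
        linarith
    have hur : (0:ℝ) ≤ u ^ r := pow_nonneg hu _
    have step : u ^ (r+1) ≤ v ^ (r+1) + ((r:ℝ)+1) * (θ * M * (1 + u)) * u ^ r := by
      have h4 := mul_le_mul_of_nonneg_right (mul_le_mul_of_nonneg_left h2 hq'.le) hur
      push_cast at hpow
      nlinarith
    have hmix : (1 + u) * u ^ r ≤ 2 * (1 + u ^ (r+1)) := by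
      have e3 : u ^ (r+1) = u * u ^ r := pow_succ' u r
      nlinarith
    have h5 : ((r:ℝ)+1) * (θ * M * (1 + u)) * u ^ r
        ≤ 2 * ((r:ℝ)+1) * M * θ * (1 + u ^ (r+1)) := by
      have hθM : 0 ≤ ((r:ℝ)+1) * (θ * M) := by positivity
      calc ((r:ℝ)+1) * (θ * M * (1 + u)) * u ^ r
          = ((r:ℝ)+1) * (θ * M) * ((1 + u) * u ^ r) := by ring
        _ ≤ ((r:ℝ)+1) * (θ * M) * (2 * (1 + u ^ (r+1))) :=
            mul_le_mul_of_nonneg_left hmix hθM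
        _ = 2 * ((r:ℝ)+1) * M * θ * (1 + u ^ (r+1)) := by ring
    have hX : 1 + u ^ (r+1)
        ≤ 1 + v ^ (r+1) + 2 * ((r:ℝ)+1) * M * θ * (1 + u ^ (r+1)) := by linarith
    nlinarith [mul_nonneg (mul_nonneg htpos (show (0:ℝ) ≤ 1 - 4*((r:ℝ)+1)*M*θ/2 by linarith)) huq,
      mul_nonneg htpos huq, mul_nonneg htpos hvq]

lemma aux_large (T M θ u v : ℝ) (hT : 0 < T) (hM : 0 < M) (_hθ0 : 0 ≤ θ) (hθT : θ ≤ T)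
    (r : ℕ) (hu : 0 ≤ u) (hv : 0 ≤ v) (hle : u ≤ v + θ * M * (1 + v)) :
    1 + u ^ (r+1) ≤ (1 + (2 * (1 + T * M)) ^ (r+1)) * (1 + v ^ (r+1)) := by
  have hvq : (0:ℝ) ≤ v ^ (r+1) := pow_nonneg hv _
  have hub : u ≤ (1 + T * M) * (1 + v) := by
    nlinarith [mul_le_mul_of_nonneg_right hθT (show (0:ℝ) ≤ M * (1 + v) by positivity)]
  have h1v : (1 + v) ^ (r+1) ≤ 2 ^ (r+1) * (1 + v ^ (r+1)) := by
    rcases le_total v 1 with h | h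
    · have h1 : (1 + v) ^ (r+1) ≤ 2 ^ (r+1) :=
        pow_le_pow_left₀ (by linarith) (by linarith) _
      nlinarith [pow_pos (show (0:ℝ) < 2 by norm_num) (r+1)]
    · have h1 : (1 + v) ^ (r+1) ≤ (2 * v) ^ (r+1) :=
        pow_le_pow_left₀ (by linarith) (by linarith) _
      have h2 : (2 * v) ^ (r+1) = 2 ^ (r+1) * v ^ (r+1) := mul_pow 2 v (r+1)
      nlinarith [pow_pos (show (0:ℝ) < 2 by norm_num) (r+1)]
  have huK : u ^ (r+1) ≤ (2 * (1 + T * M)) ^ (r+1) * (1 + v ^ (r+1)) := by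
    calc u ^ (r+1) ≤ ((1 + T * M) * (1 + v)) ^ (r+1) := pow_le_pow_left₀ hu hub _
      _ = (1 + T*M) ^ (r+1) * (1 + v) ^ (r+1) := mul_pow _ _ _
      _ ≤ (1 + T*M) ^ (r+1) * (2 ^ (r+1) * (1 + v ^ (r+1))) :=
          mul_le_mul_of_nonneg_left h1v (by positivity)
      _ = (2 * (1 + T * M)) ^ (r+1) * (1 + v ^ (r+1)) := by rw [mul_pow]; ring
  nlinarith [pow_nonneg (show (0:ℝ) ≤ 2*(1+T*M) by positivity) (r+1)]

lemma aux_scalar (T M : ℝ) (hT : 0 < T) (hM : 0 < M) (r : ℕ) :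
    ∃ C₀ : ℝ, 0 < C₀ ∧ ∀ θ ∈ Set.Icc (0:ℝ) T, ∀ u v : ℝ, 0 ≤ u → 0 ≤ v →
      u ≤ v + θ * M * (1 + v) → 1 + u ^ (r+1) ≤ Real.exp (C₀ * θ) * (1 + v ^ (r+1)) := by
  have hK1 : 1 < 1 + (2 * (1 + T * M)) ^ (r+1) := by
    have : (0:ℝ) < (2 * (1 + T * M)) ^ (r+1) := by positivity
    linarith
  obtain ⟨K, hKdef⟩ : ∃ K : ℝ, K = 1 + (2 * (1 + T * M)) ^ (r+1) := ⟨_, rfl⟩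
  rw [← hKdef] at hK1
  obtain ⟨D, hDdef, hD1⟩ : ∃ D : ℝ, D = max 1 (Real.log K) ∧ 1 ≤ D :=
    ⟨_, rfl, le_max_left _ _⟩
  have hq' : (0:ℝ) < (r:ℝ) + 1 := by positivity
  refine ⟨4 * ((r:ℝ)+1) * M * D, by positivity, ?_⟩
  rintro θ ⟨hθ0, hθT⟩ u v hu hv hle
  have hvq1 : (0:ℝ) ≤ 1 + v ^ (r+1) := by positivity
  by_cases hsmall : 4 * ((r:ℝ)+1) * M * θ ≤ 1
  · have h := aux_small M θ u v r hM hθ0 hu hv hle hsmall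
    have hexp : 1 + 4 * ((r:ℝ)+1) * M * θ ≤ Real.exp (4 * ((r:ℝ)+1) * M * D * θ) := by
      have h1 : 4 * ((r:ℝ)+1) * M * θ ≤ 4 * ((r:ℝ)+1) * M * D * θ := by
        nlinarith [mul_nonneg (mul_nonneg (mul_nonneg (show (0:ℝ) ≤ 4 by norm_num)
          hq'.le) hM.le) hθ0]
      have h2 := Real.add_one_le_exp (4 * ((r:ℝ)+1) * M * D * θ)
      linarith
    calc 1 + u ^ (r+1) ≤ (1 + 4 * ((r:ℝ)+1) * M * θ) * (1 + v ^ (r+1)) := h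
      _ ≤ Real.exp (4 * ((r:ℝ)+1) * M * D * θ) * (1 + v ^ (r+1)) :=
          mul_le_mul_of_nonneg_right hexp hvq1
  · push_neg at hsmall
    have h := aux_large T M θ u v hT hM hθ0 hθT r hu hv hle
    rw [← hKdef] at h
    have hexpK : K ≤ Real.exp (4 * ((r:ℝ)+1) * M * D * θ) := by
      have hlog : Real.log K ≤ 4 * ((r:ℝ)+1) * M * D * θ := by
        have hmax : Real.log K ≤ D := hDdef ▸ le_max_right _ _
        nlinarith
      calc K = Real.exp (Real.log K) := (Real.exp_log (by linarith)).symm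
        _ ≤ _ := Real.exp_le_exp.mpr hlog
    calc 1 + u ^ (r+1) ≤ K * (1 + v ^ (r+1)) := h
      _ ≤ Real.exp (4 * ((r:ℝ)+1) * M * D * θ) * (1 + v ^ (r+1)) :=
          mul_le_mul_of_nonneg_right hexpK hvq1

noncomputable section

/-- Euclidean space ℝⁿ. -/
abbrev Vec (n : ℕ) : Type := EuclideanSpace ℝ (Fin n)

/-- Explicit second-order Runge–Kutta map `Ψ₂^V`. -/
def rk2 {n : ℕ} (V : Vec n → Vec n) (θ : ℝ) (x : Vec n) : Vec n :=
  x + (θ / 2) • V x + (θ / 2) • V (x + θ • V x)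

/-- moment-type growth bound for the second-order Runge–Kutta map
of a Lipschitz vector field. -/
theorem rk2_growth {n : ℕ} (T : ℝ) (hT : 0 < T) (V : Vec n → Vec n)
    (hLip : ∃ L : NNReal, LipschitzWith L V) :
    ∀ p : ℕ, 1 ≤ p → ∃ C₀ : ℝ, 0 < C₀ ∧
      ∀ θ ∈ Set.Icc (0 : ℝ) T, ∀ x : Vec n,
        1 + ‖rk2 V θ x‖ ^ (2 * p) ≤ Real.exp (C₀ * θ) * (1 + ‖x‖ ^ (2 * p)) := by
  obtain ⟨L, hL⟩ := hLip
  intro p hp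
  set A : ℝ := (L : ℝ) + ‖V 0‖ + 1 with hAdef
  have hA : 0 < A := by positivity
  have hV : ∀ y : Vec n, ‖V y‖ ≤ A * (1 + ‖y‖) := by
    intro y
    have h1 : ‖V y - V 0‖ ≤ (L : ℝ) * ‖y‖ := by
      have := hL.dist_le_mul y 0
      rwa [dist_eq_norm, dist_eq_norm, sub_zero] at this
    have h2 : ‖V y‖ ≤ ‖V y - V 0‖ + ‖V 0‖ := by
      simpa using norm_add_le (V y - V 0) (V 0)
    have h3 : (0:ℝ) ≤ ‖y‖ := norm_nonneg _
    have h4 : (0:ℝ) ≤ ‖V 0‖ := norm_nonneg _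
    rw [hAdef]
    nlinarith [mul_nonneg (NNReal.coe_nonneg L) h3, mul_nonneg h4 h3, NNReal.coe_nonneg L]
  set M : ℝ := A * (3 + T * A) with hMdef
  have hM : 0 < M := by positivity
  have hbound : ∀ θ ∈ Set.Icc (0:ℝ) T, ∀ x : Vec n,
      ‖rk2 V θ x‖ ≤ ‖x‖ + θ * M * (1 + ‖x‖) := by
    rintro θ ⟨hθ0, hθT⟩ x
    have ha : (0:ℝ) ≤ ‖x‖ := norm_nonneg _
    have h1 : ‖rk2 V θ x‖ ≤ ‖x‖ + (θ/2) * ‖V x‖ + (θ/2) * ‖V (x + θ • V x)‖ := by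
      have e1 : ‖(θ/2) • V x‖ = (θ/2) * ‖V x‖ := by
        rw [norm_smul, Real.norm_eq_abs, abs_of_nonneg (by linarith)]
      have e2 : ‖(θ/2) • V (x + θ • V x)‖ = (θ/2) * ‖V (x + θ • V x)‖ := by
        rw [norm_smul, Real.norm_eq_abs, abs_of_nonneg (by linarith)]
      calc ‖rk2 V θ x‖ ≤ ‖x + (θ/2) • V x‖ + ‖(θ/2) • V (x + θ • V x)‖ :=
            norm_add_le _ _
        _ ≤ ‖x‖ + ‖(θ/2) • V x‖ + ‖(θ/2) • V (x + θ • V x)‖ := by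
            have := norm_add_le x ((θ/2) • V x); linarith
        _ = ‖x‖ + (θ/2) * ‖V x‖ + (θ/2) * ‖V (x + θ • V x)‖ := by rw [e1, e2]
    have h2 : ‖V x‖ ≤ A * (1 + ‖x‖) := hV x
    have h3 : ‖x + θ • V x‖ ≤ (1 + T * A) * (1 + ‖x‖) := by
      have e3 : ‖θ • V x‖ = θ * ‖V x‖ := by
        rw [norm_smul, Real.norm_eq_abs, abs_of_nonneg hθ0]
      have h4 : ‖x + θ • V x‖ ≤ ‖x‖ + θ * ‖V x‖ := by
        have := norm_add_le x (θ • V x); rw [e3] at this; exact this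
      have h5 : θ * ‖V x‖ ≤ T * (A * (1 + ‖x‖)) := by
        have hVx : (0:ℝ) ≤ ‖V x‖ := norm_nonneg _
        nlinarith
      nlinarith
    have h6 : ‖V (x + θ • V x)‖ ≤ A * ((2 + T * A) * (1 + ‖x‖)) := by
      have := hV (x + θ • V x)
      have h7 : 1 + ‖x + θ • V x‖ ≤ (2 + T * A) * (1 + ‖x‖) := by nlinarith
      nlinarith [norm_nonneg (x + θ • V x)]
    have hVx : (0:ℝ) ≤ ‖V x‖ := norm_nonneg _
    have hθA : (0:ℝ) ≤ θ / 2 := by linarith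
    have h8 : (θ/2) * ‖V x‖ ≤ (θ/2) * (A * (1 + ‖x‖)) :=
      mul_le_mul_of_nonneg_left h2 hθA
    have h9 : (θ/2) * ‖V (x + θ • V x)‖ ≤ (θ/2) * (A * ((2 + T * A) * (1 + ‖x‖))) :=
      mul_le_mul_of_nonneg_left h6 hθA
    rw [hMdef]
    nlinarith [mul_nonneg (mul_nonneg (mul_nonneg hθ0 hA.le)
      (show (0:ℝ) ≤ 3 + T * A by positivity)) (show (0:ℝ) ≤ 1 + ‖x‖ by linarith)]
  obtain ⟨r, hr⟩ : ∃ r : ℕ, 2 * p = r + 1 := ⟨2 * p - 1, by omega⟩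
  obtain ⟨C₀, hC₀, hmain⟩ := aux_scalar T M hT hM r
  refine ⟨C₀, hC₀, ?_⟩
  intro θ hθ x
  rw [hr]
  exact hmain θ hθ _ _ (norm_nonneg _) (norm_nonneg _) (hbound θ hθ x)
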